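/- Never-taker potential-outcome means: under Independence and Monotonicity, for each wave w with P(T_w = 0, Z = 1) > 0, E[Y_w(0) | T_w(1) = T_w(0) = 0] = E[Y_w | T_w = 0, Z = 1]; moreover, if additionally IMCO holds, then for each t ∈ {1,...,w−1} with P(T_w = t, Z = 1) > 0, E[Y_w(t) | T_w(1) = T_w(0) = t] = E[Y_w | T_w = t, Z = 1]. -/

import Mathlib

open MeasureTheory ProbabilityTheory Finset

/-- Conditional mean `E[X | A]`: the expectation of `X` under `P` conditioned on the event `A`. -/
noncomputable def cmean {Ω : Type*} [MeasurableSpace Ω] (P : MeasureTheory.Measure Ω)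
    (A : Set Ω) (X : Ω → ℝ) : ℝ :=
  ∫ ω, X ω ∂(P[|A])

lemma cmean_eq {Ω : Type*} [MeasurableSpace Ω] (P : MeasureTheory.Measure Ω)
    (A : Set Ω) (X : Ω → ℝ) :
    cmean P A X = (P A).toReal⁻¹ * ∫ ω in A, X ω ∂P := by
  rw [cmean, ProbabilityTheory.cond, integral_smul_measure, ENNReal.toReal_inv, smul_eq_mul]

lemma cmean_congr_set {Ω : Type*} [MeasurableSpace Ω] (P : MeasureTheory.Measure Ω)
    {A B : Set Ω} (h : A =ᵐ[P] B) (X : Ω → ℝ) :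
    cmean P A X = cmean P B X := by
  rw [cmean, cmean, ProbabilityTheory.cond, ProbabilityTheory.cond,
    measure_congr h, Measure.restrict_congr_set h]

lemma cmean_congr_on {Ω : Type*} [MeasurableSpace Ω] (P : MeasureTheory.Measure Ω)
    {A : Set Ω} (hA : MeasurableSet A) {X X' : Ω → ℝ} (h : ∀ ω ∈ A, X ω = X' ω) :
    cmean P A X = cmean P A X' := by
  rw [cmean_eq, cmean_eq, setIntegral_congr_fun hA h]

/-- Key independence lemma: conditioning additionally on `Z = 1` does not change the
conditional mean of a function of `W`, when `W` is independent of `Z`. -/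
lemma cmean_indep {Ω α : Type*} [MeasurableSpace Ω] [MeasurableSpace α]
    (P : MeasureTheory.Measure Ω) [IsProbabilityMeasure P]
    {W : Ω → α} {Z : Ω → ℕ} (hW : Measurable W) (hZ : Measurable Z)
    (hInd : IndepFun W Z P) {g : α → ℝ} (hg : Measurable g)
    (hgint : MeasureTheory.Integrable (fun ω => g (W ω)) P)
    {B : Set α} (hB : MeasurableSet B)
    (hpos : 0 < P (W ⁻¹' B ∩ Z ⁻¹' {1})) :
    cmean P (W ⁻¹' B) (fun ω => g (W ω))
      = cmean P (W ⁻¹' B ∩ Z ⁻¹' {1}) (fun ω => g (W ω)) := by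
  have hBm : MeasurableSet (W ⁻¹' B) := hW hB
  have hZm : MeasurableSet (Z ⁻¹' ({1} : Set ℕ)) := hZ (measurableSet_singleton 1)
  -- product formula for the measure
  have hmul : P (W ⁻¹' B ∩ Z ⁻¹' {1}) = P (W ⁻¹' B) * P (Z ⁻¹' {1}) :=
    hInd.measure_inter_preimage_eq_mul B {1} hB (measurableSet_singleton 1)
  -- independence of the two real-valued functions
  have hX1 : (fun ω => (B.indicator g) (W ω)) = (W ⁻¹' B).indicator (fun ω => g (W ω)) := by
    ext ω
    by_cases hmem : W ω ∈ B <;>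
      simp [Set.indicator_apply, hmem]
  have hX2 : (fun ω => (({1} : Set ℕ).indicator (fun _ => (1 : ℝ))) (Z ω))
      = (Z ⁻¹' {1}).indicator (fun _ => (1 : ℝ)) := by
    ext ω
    by_cases hmem : Z ω ∈ ({1} : Set ℕ) <;>
      simp [Set.indicator_apply, hmem]
  have hIndR : IndepFun (fun ω => (B.indicator g) (W ω))
      (fun ω => (({1} : Set ℕ).indicator (fun _ => (1 : ℝ))) (Z ω)) P :=
    hInd.comp (hg.indicator hB) (measurable_const.indicator (measurableSet_singleton 1))
  have hint1 : MeasureTheory.Integrable ((W ⁻¹' B).indicator (fun ω => g (W ω))) P :=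
    hgint.indicator hBm
  have hint2 : MeasureTheory.Integrable ((Z ⁻¹' {1}).indicator (fun _ => (1 : ℝ))) P :=
    (integrable_const (1 : ℝ)).indicator hZm
  have hintmul := hIndR.integral_mul_eq_mul_integral (hX1 ▸ hint1).aestronglyMeasurable
    (hX2 ▸ hint2).aestronglyMeasurable
  rw [hX1, hX2] at hintmul
  -- compute the three integrals
  have hprod : ((W ⁻¹' B).indicator (fun ω => g (W ω)))
      * ((Z ⁻¹' {1}).indicator (fun _ => (1 : ℝ)))
      = (W ⁻¹' B ∩ Z ⁻¹' {1}).indicator (fun ω => g (W ω)) := by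
    ext ω
    simp only [Pi.mul_apply]
    by_cases h1 : ω ∈ W ⁻¹' B <;> by_cases h2 : ω ∈ Z ⁻¹' ({1} : Set ℕ) <;>
      simp [Set.indicator_apply, h1, h2]
  rw [hprod, integral_indicator (hBm.inter hZm), integral_indicator hBm,
    show ((Z ⁻¹' {1}).indicator fun _ => (1 : ℝ)) = (Z ⁻¹' ({1} : Set ℕ)).indicator 1 from rfl,
    integral_indicator_one hZm, measureReal_def] at hintmul
  -- positivity facts
  have hne1 : P (W ⁻¹' B) ≠ 0 := by
    intro h0
    rw [hmul, h0, zero_mul] at hpos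
    exact lt_irrefl 0 hpos
  have hne2 : P (Z ⁻¹' {1}) ≠ 0 := by
    intro h0
    rw [hmul, h0, mul_zero] at hpos
    exact lt_irrefl 0 hpos
  have hfin1 : P (W ⁻¹' B) ≠ ⊤ := measure_ne_top P _
  have hfin2 : P (Z ⁻¹' {1}) ≠ ⊤ := measure_ne_top P _
  have ha : (P (W ⁻¹' B)).toReal ≠ 0 := ENNReal.toReal_ne_zero.2 ⟨hne1, hfin1⟩
  have hc : (P (Z ⁻¹' {1})).toReal ≠ 0 := ENNReal.toReal_ne_zero.2 ⟨hne2, hfin2⟩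
  rw [cmean_eq, cmean_eq, hintmul, hmul, ENNReal.toReal_mul]
  field_simp

theorem never_taker_and_disaggregated_always_taker_means
    {Ω : Type*} [MeasurableSpace Ω] (P : MeasureTheory.Measure Ω) [IsProbabilityMeasure P]
    (Z : Ω → ℕ) (hZmeas : Measurable Z) (hZbin : ∀ ω, Z ω ≤ 1)
    (hZpos : 0 < P {ω | Z ω = 1}) (hZlt : P {ω | Z ω = 1} < 1)
    (wbar : ℕ) (hwbar : 1 ≤ wbar)
    (T : ℕ → ℕ → Ω → ℕ) (hTmeas : ∀ w z, Measurable (T w z))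
    (hTrange : ∀ w ∈ Set.Icc 1 wbar, ∀ z ≤ 1, ∀ ω, T w z ω ≤ w)
    (Y : ℕ → ℕ → Ω → ℝ) (hYmeas : ∀ w t, Measurable (Y w t))
    (hYint : ∀ w ∈ Set.Icc 1 wbar, ∀ t ≤ w, MeasureTheory.Integrable (Y w t) P)
    (hIndep : ∀ w ∈ Set.Icc 1 wbar,
      IndepFun (fun ω => ((fun t : ℕ => Y w t ω), T w 1 ω, T w 0 ω)) Z P)
    (hMono : ∀ w ∈ Set.Icc 1 wbar, ∀ᵐ ω ∂P, T w 0 ω ≤ T w 1 ω) :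
    ∀ w ∈ Set.Icc 1 wbar,
      (0 < P {ω | T w (Z ω) ω = 0 ∧ Z ω = 1} →
        cmean P {ω | T w 1 ω = 0 ∧ T w 0 ω = 0} (fun ω => Y w 0 ω)
          = cmean P {ω | T w (Z ω) ω = 0 ∧ Z ω = 1} (fun ω => Y w (T w (Z ω) ω) ω)) ∧
      ((∀ v ∈ Set.Icc 1 wbar, ∀ᵐ ω ∂P, T v 0 ω < T v 1 ω → T v 1 ω = v) →
        ∀ t, 1 ≤ t → t < w →
          0 < P {ω | T w (Z ω) ω = t ∧ Z ω = 1} →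
          cmean P {ω | T w 1 ω = t ∧ T w 0 ω = t} (fun ω => Y w t ω)
            = cmean P {ω | T w (Z ω) ω = t ∧ Z ω = 1} (fun ω => Y w (T w (Z ω) ω) ω)) := by
  intro w hw
  -- setup common to both parts
  set W : Ω → (ℕ → ℝ) × ℕ × ℕ := fun ω => ((fun t : ℕ => Y w t ω), T w 1 ω, T w 0 ω) with hWdef
  have hWmeas : Measurable W := by
    refine Measurable.prod ?_ (Measurable.prod ?_ ?_)
    · exact measurable_pi_lambda _ (fun t => hYmeas w t)
    · exact hTmeas w 1
    · exact hTmeas w 0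
  -- main step, parametrized by t
  have main : ∀ t : ℕ, t ≤ w →
      (∀ᵐ ω ∂P, T w 1 ω = t → T w 0 ω = t) →
      0 < P {ω | T w (Z ω) ω = t ∧ Z ω = 1} →
      cmean P {ω | T w 1 ω = t ∧ T w 0 ω = t} (fun ω => Y w t ω)
        = cmean P {ω | T w (Z ω) ω = t ∧ Z ω = 1} (fun ω => Y w (T w (Z ω) ω) ω) := by
    intro t htw hae hpos
    set B : Set ((ℕ → ℝ) × ℕ × ℕ) := {p | p.2.1 = t} with hBdef
    have hB : MeasurableSet B := by
      have : B = (fun p : (ℕ → ℝ) × ℕ × ℕ => p.2.1) ⁻¹' {t} := rfl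
      rw [this]
      exact (measurable_snd.comp measurable_id).fst (measurableSet_singleton t)
    set g : (ℕ → ℝ) × ℕ × ℕ → ℝ := fun p => p.1 t with hgdef
    have hg : Measurable g := (measurable_pi_apply t).comp measurable_fst
    have hgW : (fun ω => g (W ω)) = fun ω => Y w t ω := rfl
    have hpre : W ⁻¹' B = {ω | T w 1 ω = t} := rfl
    -- the observed event equals the preimage event
    have hsetEq : {ω | T w (Z ω) ω = t ∧ Z ω = 1} = W ⁻¹' B ∩ Z ⁻¹' {1} := by
      ext ω
      simp only [Set.mem_setOf_eq, Set.mem_inter_iff, Set.mem_preimage,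
        Set.mem_singleton_iff, hpre]
      constructor
      · rintro ⟨h1, h2⟩
        rw [h2] at h1
        exact ⟨h1, h2⟩
      · rintro ⟨h1, h2⟩
        rw [h2]
        exact ⟨h1, rfl⟩
    have hposB : 0 < P (W ⁻¹' B ∩ Z ⁻¹' {1}) := by rwa [hsetEq] at hpos
    -- a.e. set equality for the compliance-type event
    have haeSet : {ω | T w 1 ω = t ∧ T w 0 ω = t} =ᵐ[P] W ⁻¹' B := by
      rw [Filter.eventuallyEq_set]
      filter_upwards [hae] with ω hω
      simp only [Set.mem_setOf_eq, hpre]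
      exact ⟨fun h => h.1, fun h => ⟨h, hω h⟩⟩
    calc cmean P {ω | T w 1 ω = t ∧ T w 0 ω = t} (fun ω => Y w t ω)
        = cmean P (W ⁻¹' B) (fun ω => g (W ω)) := by
          rw [hgW]; exact cmean_congr_set P haeSet _
      _ = cmean P (W ⁻¹' B ∩ Z ⁻¹' {1}) (fun ω => g (W ω)) :=
          cmean_indep P hWmeas hZmeas (hIndep w hw) hg
            (hgW ▸ hYint w hw t htw) hB hposB
      _ = cmean P {ω | T w (Z ω) ω = t ∧ Z ω = 1} (fun ω => Y w (T w (Z ω) ω) ω) := by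
          rw [← hsetEq]
          have hmeasSet : MeasurableSet {ω | T w (Z ω) ω = t ∧ Z ω = 1} := by
            rw [hsetEq]
            exact (hWmeas hB).inter (hZmeas (measurableSet_singleton 1))
          refine cmean_congr_on P hmeasSet ?_
          rintro ω ⟨h1, h2⟩
          rw [h2] at h1 ⊢
          simp [hgW, h1]
          exact rfl
  constructor
  · -- never-takers: t = 0
    intro hpos
    refine main 0 (Nat.zero_le w) ?_ hpos
    filter_upwards [hMono w hw] with ω hω h1
    omega
  · -- always-takers at level t, 1 ≤ t < w
    intro hIMCO t ht1 htw hpos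
    refine main t (le_of_lt htw) ?_ hpos
    filter_upwards [hMono w hw, hIMCO w hw] with ω hmono himco h1
    by_contra h0
    have hlt : T w 0 ω < T w 1 ω := by omega
    have := himco hlt
    omega
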